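/- Let (A₁, C₁) and (A₂, C₂) be observable pairs with A₁ ∈ ℝ^{n₁×n₁}, C₁ ∈ ℝ^{q₁×n₁}, A₂ ∈ ℝ^{n₂×n₂}, C₂ ∈ ℝ^{q₂×n₂}, and let T ∈ ℝ^{q₁×q₂} have full column rank q₂. If the spectra of A₁ and A₂ are disjoint, then the pair (A, C) with block-diagonal A = diag(A₁, A₂) and C = [C₁, T·C₂] is observable. -/

import Mathlib

open Matrix Polynomial

/-- A pair `(A, C)` is observable iff the only vector whose outputs `C A^k x`
all vanish is `x = 0` (equivalent to the rank-`n` observability matrix / PBH test). -/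
def Observable {n q : Type*} [Fintype n] [Fintype q] [DecidableEq n]
    (A : Matrix n n ℝ) (C : Matrix q n ℝ) : Prop :=
  ∀ x : n → ℝ, (∀ k : ℕ, C.mulVec ((A ^ k).mulVec x) = 0) → x = 0

/-- A root of the characteristic polynomial of a complex matrix is in its spectrum. -/
lemma root_mem_spectrum_aux {N : ℕ} (M : Matrix (Fin N) (Fin N) ℂ) {μ : ℂ}
    (h : M.charpoly.eval μ = 0) : μ ∈ spectrum ℂ M := by
  rw [spectrum.mem_iff]
  intro hU
  have key : M.charpoly.eval μ = (algebraMap ℂ (Matrix (Fin N) (Fin N) ℂ) μ - M).det := by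
    rw [Matrix.charpoly, eval_det, matPolyEquiv_charmatrix]
    simp only [eval_sub, eval_X, eval_C]
    congr 1
  rw [key] at h
  have := (Matrix.isUnit_iff_isUnit_det _).mp hU
  rw [h] at this
  exact this.ne_zero rfl

lemma fromBlocks_pow_aux {n₁ n₂ : ℕ} (A₁ : Matrix (Fin n₁) (Fin n₁) ℝ)
    (A₂ : Matrix (Fin n₂) (Fin n₂) ℝ) (k : ℕ) :
    (Matrix.fromBlocks A₁ 0 0 A₂) ^ k = Matrix.fromBlocks (A₁ ^ k) 0 0 (A₂ ^ k) := by
  induction k with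
  | zero => simp [Matrix.fromBlocks_one]
  | succ k ih =>
      rw [pow_succ, pow_succ, pow_succ, ih, Matrix.fromBlocks_multiply]
      simp

theorem observable_block_diag
    {n₁ n₂ q₁ q₂ : ℕ}
    (A₁ : Matrix (Fin n₁) (Fin n₁) ℝ) (C₁ : Matrix (Fin q₁) (Fin n₁) ℝ)
    (A₂ : Matrix (Fin n₂) (Fin n₂) ℝ) (C₂ : Matrix (Fin q₂) (Fin n₂) ℝ)
    (T : Matrix (Fin q₁) (Fin q₂) ℝ)
    (hObs₁ : Observable A₁ C₁) (hObs₂ : Observable A₂ C₂)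
    (hT : T.rank = q₂)
    (hspec : Disjoint (spectrum ℂ (A₁.map (algebraMap ℝ ℂ)))
      (spectrum ℂ (A₂.map (algebraMap ℝ ℂ)))) :
    Observable (Matrix.fromBlocks A₁ 0 0 A₂)
      (Matrix.of fun (i : Fin q₁) (j : Fin n₁ ⊕ Fin n₂) =>
        Sum.elim (fun j₁ => C₁ i j₁) (fun j₂ => (T * C₂) i j₂) j) := by
  intro x hx
  set x₁ : Fin n₁ → ℝ := fun j => x (Sum.inl j) with hx₁def
  set x₂ : Fin n₂ → ℝ := fun j => x (Sum.inr j) with hx₂def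
  have hxelim : x = Sum.elim x₁ x₂ := by
    funext j; cases j <;> rfl
  -- the block matrix C is `fromColumns C₁ (T * C₂)`
  have hC : (Matrix.of fun (i : Fin q₁) (j : Fin n₁ ⊕ Fin n₂) =>
      Sum.elim (fun j₁ => C₁ i j₁) (fun j₂ => (T * C₂) i j₂) j)
      = Matrix.fromCols C₁ (T * C₂) := by
    ext i j; cases j <;> rfl
  -- key reformulation of the hypothesis
  have hkey : ∀ k : ℕ,
      C₁.mulVec ((A₁ ^ k).mulVec x₁) + (T * C₂).mulVec ((A₂ ^ k).mulVec x₂) = 0 := by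
    intro k
    have h := hx k
    rw [hC, hxelim, fromBlocks_pow_aux, Matrix.fromBlocks_mulVec] at h
    simpa [Matrix.fromCols_mulVec_sumElim] using h
  -- extend to all polynomials
  have hpoly : ∀ p : ℝ[X],
      C₁.mulVec ((aeval A₁ p).mulVec x₁) + (T * C₂).mulVec ((aeval A₂ p).mulVec x₂) = 0 := by
    intro p
    induction p using Polynomial.induction_on' with
    | add p q hp hq =>
        simp only [map_add, Matrix.add_mulVec, Matrix.mulVec_add]
        calc C₁.mulVec ((aeval A₁ p).mulVec x₁) + C₁.mulVec ((aeval A₁ q).mulVec x₁) +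
              ((T * C₂).mulVec ((aeval A₂ p).mulVec x₂) +
               (T * C₂).mulVec ((aeval A₂ q).mulVec x₂))
            = (C₁.mulVec ((aeval A₁ p).mulVec x₁) +
                (T * C₂).mulVec ((aeval A₂ p).mulVec x₂)) +
              (C₁.mulVec ((aeval A₁ q).mulVec x₁) +
                (T * C₂).mulVec ((aeval A₂ q).mulVec x₂)) := by abel
          _ = 0 := by rw [hp, hq, add_zero]
    | monomial n a =>
        have e₁ : (aeval A₁ (Polynomial.monomial n a)) = a • (A₁ ^ n) := by
          rw [Polynomial.aeval_monomial, Algebra.algebraMap_eq_smul_one, smul_mul_assoc, one_mul]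
        have e₂ : (aeval A₂ (Polynomial.monomial n a)) = a • (A₂ ^ n) := by
          rw [Polynomial.aeval_monomial, Algebra.algebraMap_eq_smul_one, smul_mul_assoc, one_mul]
        rw [e₁, e₂, Matrix.smul_mulVec, Matrix.smul_mulVec,
          Matrix.mulVec_smul, Matrix.mulVec_smul, ← smul_add, hkey n, smul_zero]
  -- the characteristic polynomials are coprime
  have hcop : IsCoprime A₁.charpoly A₂.charpoly := by
    apply (Polynomial.isCoprime_iff_aeval_ne_zero_of_isAlgClosed ℝ ℂ A₁.charpoly A₂.charpoly).mpr
    intro a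
    by_contra hcontra
    push_neg at hcontra
    obtain ⟨h1, h2⟩ := hcontra
    have m1 : a ∈ spectrum ℂ (A₁.map (algebraMap ℝ ℂ)) := by
      apply root_mem_spectrum_aux
      rw [Matrix.charpoly_map, Polynomial.eval_map_algebraMap]
      exact h1
    have m2 : a ∈ spectrum ℂ (A₂.map (algebraMap ℝ ℂ)) := by
      apply root_mem_spectrum_aux
      rw [Matrix.charpoly_map, Polynomial.eval_map_algebraMap]
      exact h2
    exact Set.disjoint_left.mp hspec m1 m2
  obtain ⟨u, v, huv⟩ := hcop
  have hv : v * A₂.charpoly = 1 - u * A₁.charpoly := eq_sub_of_add_eq' huv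
  -- x₁ = 0
  have hx₁ : x₁ = 0 := by
    apply hObs₁
    intro k
    have h := hpoly (X ^ k * (v * A₂.charpoly))
    have e₂ : aeval A₂ (X ^ k * (v * A₂.charpoly)) = 0 := by
      rw [_root_.map_mul, _root_.map_mul, Matrix.aeval_self_charpoly, mul_zero, mul_zero]
    have e₁ : aeval A₁ (X ^ k * (v * A₂.charpoly)) = A₁ ^ k := by
      rw [hv, _root_.map_mul, map_sub, _root_.map_one, _root_.map_mul, Matrix.aeval_self_charpoly,
        mul_zero, sub_zero, mul_one, Polynomial.aeval_X_pow]
    rw [e₁, e₂, Matrix.zero_mulVec, Matrix.mulVec_zero, add_zero] at h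
    exact h
  -- T has injective mulVec
  have hinj : Function.Injective T.mulVecLin := by
    rw [← LinearMap.ker_eq_bot]
    have hrn := T.mulVecLin.finrank_range_add_finrank_ker
    rw [show Module.finrank ℝ (LinearMap.range T.mulVecLin) = q₂ from hT,
      Module.finrank_fin_fun ℝ] at hrn
    have : Module.finrank ℝ (LinearMap.ker T.mulVecLin) = 0 := by omega
    exact Submodule.finrank_eq_zero.mp this
  -- x₂ = 0
  have hx₂ : x₂ = 0 := by
    apply hObs₂
    intro k
    have h := hkey k
    rw [hx₁, Matrix.mulVec_zero, Matrix.mulVec_zero, zero_add] at h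
    have h' : T.mulVecLin (C₂.mulVec ((A₂ ^ k).mulVec x₂)) = T.mulVecLin 0 := by
      rw [Matrix.mulVecLin_apply, Matrix.mulVecLin_apply, Matrix.mulVec_zero,
        Matrix.mulVec_mulVec]
      exact h
    exact hinj h'
  funext j
  cases j with
  | inl j => exact congrFun hx₁ j
  | inr j => exact congrFun hx₂ j
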